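/- arXiv:1406.1965 — 5 statements merged into one kernel-verified Lean document; each statement's English description precedes it below -/
import Mathlib

section
/- If two products of vector operations are equal, s̲₁⋯s̲ₙ = t̲₁⋯t̲ₘ in Vops(L̲)*, then n = m, and for each generator a̲ ∈ Vops(L̲) the number of occurrences of a̲ among s̲₁,...,s̲ₙ equals the number among t̲₁,...,t̲ₘ. -/
open scoped Classical

/-- Projection of a string onto a subalphabet `A`: delete all symbols not in `A`. -/
noncomputable def proj {α : Type*} (A : Set α) : List α → List α
  | [] => []
  | a :: s => if a ∈ A then a :: proj A s else proj A s

/-- The vector operation `σ̲ = (σ/A₁, …, σ/Aₙ)` associated to a symbol `σ`. -/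
noncomputable def vop {α : Type*} {n : ℕ} (A : Fin n → Set α) (σ : α) :
    Fin n → List α :=
  fun i => if σ ∈ A i then [σ] else []

/-- The product `σ̲₁ ⋯ σ̲ₘ` (elementwise concatenation in `(Σ*)ⁿ`) of the vector
operations of the symbols in a list. -/
noncomputable def vprod {α : Type*} {n : ℕ} (A : Fin n → Set α) :
    List α → (Fin n → List α)
  | [] => fun _ => []
  | σ :: l => fun i => vop A σ i ++ vprod A l i

lemma count_vprod {α : Type*} [DecidableEq α] {n : ℕ} (A : Fin n → Set α)
    (l : List α) (i : Fin n) (σ : α) (hσ : σ ∈ A i) :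
    (vprod A l i).count σ = l.count σ := by
  induction l with
  | nil => simp [vprod]
  | cons τ l ih =>
    simp only [vprod, List.count_append, ih, vop]
    by_cases hτσ : τ = σ
    · subst hτσ
      simp [hσ, List.count_cons, Nat.add_comm]
    · by_cases hτ : τ ∈ A i <;>
        simp [hτ, List.count_cons, hτσ, Ne.symm hτσ]

/-- Equal products of vector operations have the same length and the same number
of occurrences of each generator. -/
theorem vprod_eq_length_count {α : Type*} [DecidableEq α] {n : ℕ}
    (A : Fin n → Set α) (ws vs : List α)
    (hws : ∀ σ ∈ ws, σ ∈ ⋃ i, A i) (hvs : ∀ σ ∈ vs, σ ∈ ⋃ i, A i)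
    (h : vprod A ws = vprod A vs) :
    ws.length = vs.length ∧ ∀ σ : α, ws.count σ = vs.count σ := by
  have hcount : ∀ σ : α, ws.count σ = vs.count σ := by
    intro σ
    by_cases hw : σ ∈ ws
    · obtain ⟨_, ⟨i, rfl⟩, hi⟩ := hws σ hw
      rw [← count_vprod A ws i σ hi, ← count_vprod A vs i σ hi, h]
    · by_cases hv : σ ∈ vs
      · obtain ⟨_, ⟨i, rfl⟩, hi⟩ := hvs σ hv
        rw [← count_vprod A ws i σ hi, ← count_vprod A vs i σ hi, h]
      · rw [List.count_eq_zero_of_not_mem hw, List.count_eq_zero_of_not_mem hv]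
  exact ⟨(List.perm_iff_count.mpr hcount).length_eq, hcount⟩
end

section
/- Any two equal products of vector operations can be obtained from each other by a sequence of transpositions of adjacent commuting generators: if s̲₁⋯s̲ₙ = t̲₁⋯t̲ₙ in Vops(L̲)*, then the sequence (t̲₁,...,t̲ₙ) is obtained from (s̲₁,...,s̲ₙ) by swaps of adjacent generators a̲,b̲ with a̲b̲ = b̲a̲. -/
open scoped Classical

/-- One step of transposing two adjacent commuting generators. -/
inductive SwapStep {α : Type*} {n : ℕ} (A : Fin n → Set α) : List α → List α → Prop
  | swap (l r : List α) (σ τ : α) :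
      (fun i => vop A σ i ++ vop A τ i) = (fun i => vop A τ i ++ vop A σ i) →
      SwapStep A (l ++ σ :: τ :: r) (l ++ τ :: σ :: r)

lemma proj_append {α : Type*} (A : Set α) (l₁ l₂ : List α) :
    proj A (l₁ ++ l₂) = proj A l₁ ++ proj A l₂ := by
  induction l₁ with
  | nil => simp [proj]
  | cons a l ih =>
    by_cases h : a ∈ A <;> simp [proj, h, ih]

lemma mem_of_mem_proj {α : Type*} {A : Set α} {a : α} {l : List α}
    (h : a ∈ proj A l) : a ∈ l := by
  induction l with
  | nil => simpa [proj] using h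
  | cons b l ih =>
    by_cases hb : b ∈ A
    · simp only [proj, if_pos hb, List.mem_cons] at h
      rcases h with h | h
      · simp [h]
      · exact List.mem_cons_of_mem _ (ih h)
    · simp only [proj, if_neg hb] at h
      exact List.mem_cons_of_mem _ (ih h)

lemma mem_proj {α : Type*} {A : Set α} {a : α} {l : List α}
    (hl : a ∈ l) (hA : a ∈ A) : a ∈ proj A l := by
  induction l with
  | nil => simp at hl
  | cons b l ih =>
    rcases List.mem_cons.mp hl with h | h
    · subst h; simp [proj, hA]
    · by_cases hb : b ∈ A <;> simp [proj, hb, ih h]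

lemma proj_eq_nil {α : Type*} {A : Set α} {l : List α}
    (h : ∀ a ∈ l, a ∉ A) : proj A l = [] := by
  induction l with
  | nil => rfl
  | cons b l ih =>
    simp only [proj, if_neg (h b (by simp))]
    exact ih fun a ha => h a (by simp [ha])

lemma vprod_eq_proj {α : Type*} {n : ℕ} (A : Fin n → Set α) (l : List α) (i : Fin n) :
    vprod A l i = proj (A i) l := by
  induction l with
  | nil => rfl
  | cons a l ih =>
    by_cases h : a ∈ A i <;> simp [vprod, vop, proj, h, ih]

lemma SwapStep.symm' {α : Type*} {n : ℕ} {A : Fin n → Set α} {u v : List α}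
    (h : SwapStep A u v) : SwapStep A v u := by
  cases h with
  | swap l r σ τ hc => exact SwapStep.swap l r τ σ hc.symm

lemma SwapStep.cons {α : Type*} {n : ℕ} {A : Fin n → Set α} {u v : List α} (a : α)
    (h : SwapStep A u v) : SwapStep A (a :: u) (a :: v) := by
  cases h with
  | swap l r σ τ hc => exact SwapStep.swap (a :: l) r σ τ hc

lemma rtg_cons {α : Type*} {n : ℕ} {A : Fin n → Set α} {u v : List α} (a : α)
    (h : Relation.ReflTransGen (SwapStep A) u v) :
    Relation.ReflTransGen (SwapStep A) (a :: u) (a :: v) :=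
  Relation.ReflTransGen.lift (a :: ·) (fun _ _ hh => SwapStep.cons a hh) _ _ h

lemma move_front {α : Type*} {n : ℕ} {A : Fin n → Set α} (σ : α) (v₁ v₂ : List α)
    (hc : ∀ τ ∈ v₁,
      (fun i => vop A σ i ++ vop A τ i) = (fun i => vop A τ i ++ vop A σ i)) :
    Relation.ReflTransGen (SwapStep A) (σ :: (v₁ ++ v₂)) (v₁ ++ σ :: v₂) := by
  induction v₁ with
  | nil => exact .refl
  | cons τ v₁ ih =>
    have step : SwapStep A (σ :: τ :: (v₁ ++ v₂)) (τ :: σ :: (v₁ ++ v₂)) :=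
      SwapStep.swap [] (v₁ ++ v₂) σ τ (hc τ (by simp))
    exact Relation.ReflTransGen.head step
      (rtg_cons τ (ih fun τ' h => hc τ' (by simp [h])))

lemma exists_first {α : Type*} {a : α} {l : List α} (h : a ∈ l) :
    ∃ s t, l = s ++ a :: t ∧ a ∉ s := by
  induction l with
  | nil => simp at h
  | cons b l ih =>
    by_cases hb : a = b
    · exact ⟨[], l, by simp [hb], by simp⟩
    · have hl : a ∈ l := by
        rcases List.mem_cons.mp h with h' | h'
        · exact absurd h' hb
        · exact h'
      obtain ⟨s, t, heq, ha⟩ := ih hl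
      exact ⟨b :: s, t, by simp [heq], by simp [hb, ha]⟩

lemma vprod_swaps_aux {α : Type*} {n : ℕ} (A : Fin n → Set α) :
    ∀ ws vs : List α, (∀ σ ∈ ws, σ ∈ ⋃ i, A i) → (∀ σ ∈ vs, σ ∈ ⋃ i, A i) →
    (∀ i, proj (A i) ws = proj (A i) vs) →
    Relation.ReflTransGen (SwapStep A) ws vs := by
  intro ws
  induction ws with
  | nil =>
    intro vs _ hvs hp
    cases vs with
    | nil => exact .refl
    | cons τ vs' =>
      obtain ⟨i, hi⟩ := Set.mem_iUnion.mp (hvs τ (by simp))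
      have h1 := hp i
      simp [proj, hi] at h1
  | cons σ ws' ih =>
    intro vs hws hvs hp
    obtain ⟨i₀, hi₀⟩ := Set.mem_iUnion.mp (hws σ (by simp))
    have hσvs : σ ∈ vs := by
      have h1 := hp i₀
      simp only [proj, if_pos hi₀] at h1
      exact mem_of_mem_proj (h1 ▸ (List.mem_cons_self (a := σ) (l := proj (A i₀) ws')))
    obtain ⟨v₁, v₂, rfl, hσv₁⟩ := exists_first hσvs
    have key : ∀ τ ∈ v₁, ∀ i, σ ∈ A i → τ ∉ A i := by
      intro τ hτ i hσi hτi
      have h1 := hp i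
      rw [proj_append] at h1
      simp only [proj, if_pos hσi] at h1
      cases hpv : proj (A i) v₁ with
      | nil => exact absurd (mem_proj hτ hτi) (by simp [hpv])
      | cons x xs =>
        rw [hpv] at h1
        simp only [List.cons_append, List.cons.injEq] at h1
        exact hσv₁ (h1.1 ▸ mem_of_mem_proj (hpv ▸ (List.mem_cons_self (a := x) (l := xs))))
    have hcomm : ∀ τ ∈ v₁,
        (fun i => vop A σ i ++ vop A τ i) = (fun i => vop A τ i ++ vop A σ i) := by
      intro τ hτ
      funext i
      by_cases hσi : σ ∈ A i
      · simp [vop, hσi, key τ hτ i hσi]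
      · simp [vop, hσi]
    have hp' : ∀ i, proj (A i) ws' = proj (A i) (v₁ ++ v₂) := by
      intro i
      have h1 := hp i
      rw [proj_append] at h1
      rw [proj_append]
      by_cases hσi : σ ∈ A i
      · have hv₁ : proj (A i) v₁ = [] := proj_eq_nil (fun a ha => key a ha i hσi)
        rw [hv₁] at h1 ⊢
        simp only [proj, if_pos hσi, List.nil_append, List.cons.injEq] at h1
        simpa using h1.2
      · simp only [proj, if_neg hσi] at h1
        exact h1
    have hws' : ∀ τ ∈ ws', τ ∈ ⋃ i, A i := fun τ hτ => hws τ (by simp [hτ])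
    have hv : ∀ τ ∈ v₁ ++ v₂, τ ∈ ⋃ i, A i := by
      intro τ hτ
      apply hvs
      rcases List.mem_append.mp hτ with h' | h' <;> simp [h']
    have step1 : Relation.ReflTransGen (SwapStep A) (σ :: ws') (σ :: (v₁ ++ v₂)) :=
      rtg_cons σ (ih (v₁ ++ v₂) hws' hv hp')
    exact step1.trans (move_front σ v₁ v₂ hcomm)

/-- Two equal products of vector operations are related by a sequence of
transpositions of adjacent commuting generators. -/
theorem vprod_eq_swaps {α : Type*} {n : ℕ} (A : Fin n → Set α) (ws vs : List α)
    (hws : ∀ σ ∈ ws, σ ∈ ⋃ i, A i) (hvs : ∀ σ ∈ vs, σ ∈ ⋃ i, A i)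
    (hlen : ws.length = vs.length)
    (h : vprod A ws = vprod A vs) :
    Relation.ReflTransGen (SwapStep A) ws vs := by
  apply vprod_swaps_aux A ws vs hws hvs
  intro i
  rw [← vprod_eq_proj, ← vprod_eq_proj, h]
end

section
/- Every function f from the set of vector-operation generators of L to Vops(L')* that preserves commutation (a̲b̲ = b̲a̲ implies f(a̲)f(b̲) = f(b̲)f(a̲)) extends uniquely to a monoid homomorphism Vops(L)* → Vops(L')*. -/
open scoped Classical

/-- The vector operation `σ̲ = (σ/A₁, …, σ/Aₙ)` in the product monoid
`(FreeMonoid α)ⁿ`. -/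
noncomputable def vopF {α : Type*} {n : ℕ} (A : Fin n → Set α) (σ : α) :
    Fin n → FreeMonoid α :=
  fun i => if σ ∈ A i then FreeMonoid.of σ else 1

/-- The set of vector-operation generators for subalphabets `A`. -/
noncomputable def Gens {α : Type*} {n : ℕ} (A : Fin n → Set α) :
    Set (Fin n → FreeMonoid α) :=
  {v | ∃ σ ∈ ⋃ i, A i, v = vopF A σ}

section Aux

variable {α : Type*} {n : ℕ} {A : Fin n → Set α}

/-- A generator is non-trivial in some component. -/
lemma gens_ne_one {a : Fin n → FreeMonoid α} (ha : a ∈ Gens A) :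
    ∃ i, a i ≠ 1 := by
  obtain ⟨σ, hσ, rfl⟩ := ha
  obtain ⟨_, ⟨i, rfl⟩, hi⟩ := hσ
  refine ⟨i, ?_⟩
  simp only [vopF, if_pos hi]
  intro h
  have := congrArg FreeMonoid.toList h
  simp at this

/-- Disjointly supported elements commute. -/
lemma disj_comm {a b : Fin n → FreeMonoid α}
    (h : ∀ i, a i = 1 ∨ b i = 1) : a * b = b * a := by
  funext i
  rcases h i with h' | h' <;> simp [h']

/-- Head extraction: if `a ∈ Gens A` and `a * x = l.prod` where all elements of
`l` are generators, then `l = p ++ a :: s` with every element of `p`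
disjointly supported from `a`. -/
lemma extract_head {a : Fin n → FreeMonoid α} (ha : a ∈ Gens A) :
    ∀ l : List (Fin n → FreeMonoid α), (∀ c ∈ l, c ∈ Gens A) →
      ∀ x, a * x = l.prod →
      ∃ p s, l = p ++ a :: s ∧ ∀ c ∈ p, ∀ i, a i = 1 ∨ c i = 1 := by
  intro l
  induction l with
  | nil =>
    intro _ x hx
    obtain ⟨i, hi⟩ := gens_ne_one ha
    exfalso
    have := congrArg (fun w => (FreeMonoid.toList (w i)).length) hx
    simp only [List.prod_nil, Pi.mul_apply, Pi.one_apply] at this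
    rw [FreeMonoid.toList_mul] at this
    simp at this
    exact hi (FreeMonoid.toList.injective (by simpa using this.1))
  | cons b r ih =>
    intro hmem x hx
    by_cases hdisj : ∀ i, a i = 1 ∨ b i = 1
    · -- b is disjoint from a; pass a through
      set y : Fin n → FreeMonoid α := fun i => if a i = 1 then r.prod i else x i with hy
      have hax : a * y = r.prod := by
        funext i
        rcases hdisj i with h1 | h1
        · simp [hy, h1]
        · have := congrArg (fun w => w i) hx
          simp only [Pi.mul_apply, List.prod_cons, h1, one_mul] at this
          simp only [Pi.mul_apply, hy]
          split
          · next h2 => simp [h2]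
          · exact this
      obtain ⟨p, s, rfl, hp⟩ := ih (fun c hc => hmem c (List.mem_cons_of_mem _ hc)) y hax
      exact ⟨b :: p, s, rfl, by
        intro c hc
        rcases List.mem_cons.1 hc with rfl | hc
        · exact hdisj
        · exact hp c hc⟩
    · -- b shares a component with a, hence b = a
      push_neg at hdisj
      obtain ⟨i, hai, hbi⟩ := hdisj
      obtain ⟨σ, _, rfl⟩ := ha
      obtain ⟨τ, _, rfl⟩ := hmem b (List.mem_cons_self)
      have hσ : σ ∈ A i := by
        by_contra h; exact hai (by simp [vopF, h])
      have hτ : τ ∈ A i := by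
        by_contra h; exact hbi (by simp [vopF, h])
      have hi := congrArg (fun w => (FreeMonoid.toList (w i)).head?) hx
      simp only [Pi.mul_apply, List.prod_cons, FreeMonoid.toList_mul, vopF,
        if_pos hσ, if_pos hτ, FreeMonoid.toList_of] at hi
      simp only [List.head?] at hi
      have hστ : σ = τ := by simpa using hi
      subst hστ
      exact ⟨[], r, rfl, by simp⟩

/-- A product of generators is `1` only if the list is empty. -/
lemma prod_eq_one_iff {l : List (Fin n → FreeMonoid α)}
    (hl : ∀ c ∈ l, c ∈ Gens A) (h : l.prod = 1) : l = [] := by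
  cases l with
  | nil => rfl
  | cons b r =>
    exfalso
    obtain ⟨i, hi⟩ := gens_ne_one (hl b (List.mem_cons_self))
    have := congrArg (fun w => (FreeMonoid.toList (w i)).length) h
    simp only [List.prod_cons, Pi.mul_apply, Pi.one_apply] at this
    rw [FreeMonoid.toList_mul] at this
    simp at this
    exact hi (FreeMonoid.toList.injective (by simpa using this.1))

/-- Key invariance lemma: if two lists of generators have the same product,
then their `f`-images have the same product. -/
lemma key_lemma {m : ℕ}
    (f : (Fin n → FreeMonoid α) → (Fin m → FreeMonoid α))
    (hcomm : ∀ a ∈ Gens A, ∀ b ∈ Gens A,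
      a * b = b * a → f a * f b = f b * f a) :
    ∀ l₁ l₂ : List (Fin n → FreeMonoid α),
      (∀ c ∈ l₁, c ∈ Gens A) → (∀ c ∈ l₂, c ∈ Gens A) →
      l₁.prod = l₂.prod → (l₁.map f).prod = (l₂.map f).prod := by
  intro l₁
  induction l₁ with
  | nil =>
    intro l₂ _ h₂ hp
    rw [prod_eq_one_iff h₂ hp.symm]
  | cons a t ih =>
    intro l₂ h₁ h₂ hp
    have ha : a ∈ Gens A := h₁ a (List.mem_cons_self)
    rw [List.prod_cons] at hp
    obtain ⟨p, s, rfl, hdisj⟩ := extract_head ha l₂ h₂ t.prod hp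
    have hpmem : ∀ c ∈ p, c ∈ Gens A := fun c hc =>
      h₂ c (List.mem_append_left _ hc)
    have hsmem : ∀ c ∈ s, c ∈ Gens A := fun c hc =>
      h₂ c (List.mem_append_right _ (List.mem_cons_of_mem _ hc))
    -- a commutes with p.prod
    have hcomm_a : Commute a p.prod :=
      Commute.list_prod_right _ _ (fun c hc => (disj_comm (hdisj c hc)))
    -- rewrite the product: (p ++ a :: s).prod = a * (p ++ s).prod
    have hprod : (p ++ a :: s).prod = a * (p ++ s).prod := by
      rw [List.prod_append, List.prod_cons, List.prod_append,
        ← mul_assoc, ← hcomm_a.eq, mul_assoc]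
    rw [hprod] at hp
    have ht : t.prod = (p ++ s).prod := mul_left_cancel hp
    have hIH := ih (p ++ s) (fun c hc => h₁ c (List.mem_cons_of_mem _ hc))
      (by intro c hc; rcases List.mem_append.1 hc with hc | hc
          exacts [hpmem c hc, hsmem c hc]) ht
    -- f a commutes with (p.map f).prod
    have hcomm_fa : Commute (f a) (p.map f).prod := by
      apply Commute.list_prod_right
      intro x hx
      obtain ⟨c, hc, rfl⟩ := List.mem_map.1 hx
      exact hcomm a ha c (hpmem c hc) (disj_comm (hdisj c hc))
    calc ((a :: t).map f).prod = f a * (t.map f).prod := by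
          rw [List.map_cons, List.prod_cons]
      _ = f a * ((p ++ s).map f).prod := by rw [hIH]
      _ = f a * ((p.map f).prod * (s.map f).prod) := by
          rw [List.map_append, List.prod_append]
      _ = (p.map f).prod * (f a * (s.map f).prod) := by
          rw [← mul_assoc, hcomm_fa.eq, mul_assoc]
      _ = ((p ++ a :: s).map f).prod := by
          rw [List.map_append, List.prod_append, List.map_cons, List.prod_cons]

end Aux

/-- Every commutation-preserving map from the generators of `Vops(L)` into
`Vops(L')*` extends uniquely to a monoid homomorphism
`Vops(L)* → Vops(L')*`. -/
theorem vops_universal {α : Type*} {n m : ℕ} (A : Fin n → Set α)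
    (A' : Fin m → Set α)
    (f : (Fin n → FreeMonoid α) → (Fin m → FreeMonoid α))
    (hf : ∀ v ∈ Gens A, f v ∈ Submonoid.closure (Gens A'))
    (hcomm : ∀ a ∈ Gens A, ∀ b ∈ Gens A,
      a * b = b * a → f a * f b = f b * f a) :
    ∃! g : Submonoid.closure (Gens A) →* Submonoid.closure (Gens A'),
      ∀ v (hv : v ∈ Gens A),
        (g ⟨v, Submonoid.subset_closure hv⟩ : Fin m → FreeMonoid α) = f v := by
  classical
  -- choice of a list of generators for each element of the closure
  have hex : ∀ x : Submonoid.closure (Gens A),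
      ∃ l : List (Fin n → FreeMonoid α),
        (∀ c ∈ l, c ∈ Gens A) ∧ l.prod = (x : Fin n → FreeMonoid α) :=
    fun x => Submonoid.exists_list_of_mem_closure x.2
  choose L hLmem hLprod using hex
  have hval : ∀ x, ((L x).map f).prod ∈ Submonoid.closure (Gens A') := by
    intro x
    apply Submonoid.list_prod_mem
    intro c hc
    obtain ⟨v, hv, rfl⟩ := List.mem_map.1 hc
    exact hf v (hLmem x v hv)
  -- well-definedness: the value depends only on the product
  have hwd : ∀ (x : Submonoid.closure (Gens A))
      (l : List (Fin n → FreeMonoid α)), (∀ c ∈ l, c ∈ Gens A) →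
      l.prod = (x : Fin n → FreeMonoid α) →
      ((L x).map f).prod = (l.map f).prod := by
    intro x l hl hp
    exact key_lemma f hcomm (L x) l (hLmem x) hl (by rw [hLprod x, hp])
  refine ⟨{ toFun := fun x => ⟨((L x).map f).prod, hval x⟩
            map_one' := ?_
            map_mul' := ?_ }, ?_, ?_⟩
  · ext1
    exact hwd 1 [] (by simp) (by simp)
  · intro x y
    ext1
    simp only [Submonoid.coe_mul]
    rw [hwd (x * y) (L x ++ L y)
      (by intro c hc; rcases List.mem_append.1 hc with hc | hc
          exacts [hLmem x c hc, hLmem y c hc])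
      (by rw [List.prod_append, hLprod x, hLprod y]; rfl)]
    rw [List.map_append, List.prod_append]
  · intro v hv
    have := hwd ⟨v, Submonoid.subset_closure hv⟩ [v] (by simpa using hv) (by simp)
    simpa using this
  · -- uniqueness
    intro g' hg'
    apply MonoidHom.ext
    rintro ⟨x, hx⟩
    apply Subtype.ext
    have key : ∀ (y : Fin n → FreeMonoid α) (hy : y ∈ Submonoid.closure (Gens A)),
        (g' ⟨y, hy⟩ : Fin m → FreeMonoid α) = ((L ⟨y, hy⟩).map f).prod := by
      intro y hy
      induction hy using Submonoid.closure_induction with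
      | mem z hz =>
        rw [hg' z hz]
        have := hwd ⟨z, Submonoid.subset_closure hz⟩ [z] (by simpa using hz)
          (by simp)
        simpa using this.symm
      | one =>
        have h0 := hwd 1 [] (by simp) (by simp)
        simp only [List.map_nil, List.prod_nil] at h0
        have h1 : (⟨1, Submonoid.one_mem _⟩ : Submonoid.closure (Gens A)) = 1 :=
          rfl
        rw [h1, h0, map_one]
        rfl
      | mul z w hz hw ihz ihw =>
        have : (⟨z * w, Submonoid.mul_mem _ hz hw⟩ :
            Submonoid.closure (Gens A)) = ⟨z, hz⟩ * ⟨w, hw⟩ := rfl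
        rw [this, map_mul]
        have hcoe : ((g' ⟨z, hz⟩ * g' ⟨w, hw⟩ :
            Submonoid.closure (Gens A')) : Fin m → FreeMonoid α)
            = (g' ⟨z, hz⟩ : Fin m → FreeMonoid α) * (g' ⟨w, hw⟩ :
              Fin m → FreeMonoid α) := rfl
        rw [hcoe, ihz, ihw]
        rw [hwd (⟨z, hz⟩ * ⟨w, hw⟩) (L ⟨z, hz⟩ ++ L ⟨w, hw⟩)
          (by intro c hc; rcases List.mem_append.1 hc with hc | hc
              exacts [hLmem _ c hc, hLmem _ c hc])
          (by rw [List.prod_append, hLprod, hLprod]; rfl)]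
        rw [List.map_append, List.prod_append]
    have h := key x hx
    simpa using h
end

section
/- A vector s̲ ∈ L₁ × ⋯ × Lₙ lies in Vops(αL₁,...,αLₙ)* if and only if s̲ is reachable from ε̲ = (ε,...,ε) by repeatedly appending vector operations σ̲ while staying inside L₁ × ⋯ × Lₙ at every step. Consequently VFS(L₁,...,Lₙ) equals the algebraic closure of ε̲ under the partial operations s̲ ↦ s̲σ̲ (defined when s̲σ̲ ∈ L₁ × ⋯ × Lₙ). -/
open scoped Classical

/-- Membership in the submonoid `Vops(A₁,…,Aₙ)*` of `(Σ*)ⁿ` generated by the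
vector operations. -/
noncomputable def InVops {α : Type*} {n : ℕ} (A : Fin n → Set α)
    (v : Fin n → List α) : Prop :=
  ∃ l : List α, (∀ σ ∈ l, σ ∈ ⋃ i, A i) ∧ vprod A l = v

/-- `VFS(L₁,…,Lₙ) = Vops(A₁,…,Aₙ)* ∩ (L₁ × ⋯ × Lₙ)`. -/
noncomputable def VFS {α : Type*} {n : ℕ} (A : Fin n → Set α)
    (L : Fin n → Set (List α)) : Set (Fin n → List α) :=
  {v | InVops A v ∧ ∀ i, v i ∈ L i}

/-- `L₁ ‖ ⋯ ‖ Lₙ = {s ∈ (⋃ᵢAᵢ)* : s/Aᵢ ∈ Lᵢ for all i}`. -/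
noncomputable def Par {α : Type*} {n : ℕ} (A : Fin n → Set α)
    (L : Fin n → Set (List α)) : Set (List α) :=
  {s | (∀ a ∈ s, a ∈ ⋃ i, A i) ∧ ∀ i, proj (A i) s ∈ L i}

/-- The hypotheses that each `(Lᵢ, Aᵢ)` is a nonempty prefix-closed language
over the subalphabet `Aᵢ`. -/
def IsPCL {α : Type*} {n : ℕ} (A : Fin n → Set α)
    (L : Fin n → Set (List α)) : Prop :=
  ∀ i, (L i).Nonempty ∧ (∀ s ∈ L i, ∀ a ∈ s, a ∈ A i) ∧
    (∀ s ∈ L i, ∀ t, t <+: s → t ∈ L i)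

/-- Reachability from `ε̲` by appending vector operations while staying inside
`L₁ × ⋯ × Lₙ` at every step. -/
inductive Reach {α : Type*} {n : ℕ} (A : Fin n → Set α)
    (L : Fin n → Set (List α)) : (Fin n → List α) → Prop
  | nil : (∀ i, ([] : List α) ∈ L i) → Reach A L (fun _ => [])
  | snoc {s : Fin n → List α} {σ : α} :
      Reach A L s → σ ∈ ⋃ i, A i →
      (∀ i, (s i ++ vop A σ i) ∈ L i) →
      Reach A L (fun i => s i ++ vop A σ i)

lemma vprod_append {α : Type*} {n : ℕ} (A : Fin n → Set α) (l l' : List α) (i : Fin n) :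
    vprod A (l ++ l') i = vprod A l i ++ vprod A l' i := by
  induction l with
  | nil => simp [vprod]
  | cons σ t ih => simp [vprod, ih]

lemma reach_mem {α : Type*} {n : ℕ} {A : Fin n → Set α} {L : Fin n → Set (List α)}
    {s : Fin n → List α} (h : Reach A L s) : ∀ i, s i ∈ L i := by
  cases h with
  | nil h => exact h
  | snoc _ _ h => exact h

/-- A vector of `L₁ × ⋯ × Lₙ` lies in `Vops*` iff it is reachable from `ε̲`
staying inside `L₁ × ⋯ × Lₙ`; consequently `VFS(L₁,…,Lₙ)` is exactly the
algebraic closure of `ε̲` under the partial successor operations. -/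
theorem vfs_eq_reach {α : Type*} {n : ℕ} (A : Fin n → Set α)
    (L : Fin n → Set (List α)) (hL : IsPCL A L) :
    (∀ s : Fin n → List α, (∀ i, s i ∈ L i) → (InVops A s ↔ Reach A L s)) ∧
    VFS A L = {s | Reach A L s} := by
  have hnil : ∀ i, ([] : List α) ∈ L i := by
    intro i
    obtain ⟨s, hs⟩ := (hL i).1
    exact (hL i).2.2 s hs [] (List.nil_prefix)
  have fwd : ∀ l : List α, (∀ σ ∈ l, σ ∈ ⋃ i, A i) →
      (∀ i, vprod A l i ∈ L i) → Reach A L (vprod A l) := by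
    intro l
    induction l using List.reverseRecOn with
    | nil =>
      intro _ _
      exact Reach.nil hnil
    | append_singleton t σ ih =>
      intro hmem hin
      have h1 : ∀ i, vprod A t i ∈ L i := by
        intro i
        exact (hL i).2.2 _ (hin i) _ (by rw [vprod_append]; exact ⟨_, rfl⟩)
      have hr := ih (fun σ' h => hmem σ' (List.mem_append_left _ h)) h1
      have h2 : ∀ i, vprod A t i ++ vop A σ i ∈ L i := by
        intro i
        have := hin i
        rw [vprod_append] at this
        simpa [vprod] using this
      have := Reach.snoc hr (hmem σ (by simp)) h2
      have heq : (fun i => vprod A t i ++ vop A σ i) = vprod A (t ++ [σ]) := by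
        funext i; rw [vprod_append]; simp [vprod]
      rwa [heq] at this
  have bwd : ∀ s : Fin n → List α, Reach A L s → InVops A s := by
    intro s h
    induction h with
    | nil _ => exact ⟨[], by simp, rfl⟩
    | @snoc s' σ' _ hσ _ ih =>
      obtain ⟨l, hl, hv⟩ := ih
      refine ⟨l ++ [σ'], ?_, ?_⟩
      · intro τ hτ
        rcases List.mem_append.1 hτ with h | h
        · exact hl τ h
        · simp at h; subst h; exact hσ
      · funext i; rw [vprod_append, ← hv]; simp [vprod]
  have main : ∀ s : Fin n → List α, (∀ i, s i ∈ L i) → (InVops A s ↔ Reach A L s) := by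
    intro s hs
    constructor
    · rintro ⟨l, hl, rfl⟩
      exact fwd l hl hs
    · exact bwd s
  refine ⟨main, ?_⟩
  ext s
  constructor
  · rintro ⟨hv, hs⟩
    exact (main s hs).1 hv
  · intro h
    exact ⟨bwd s h, reach_mem h⟩
end

section
/- Projecting each component of the vector firing sequence construction recovers the parallel composition: {σ₁⋯σₘ ∈ Σ* : σ̲₁⋯σ̲ₘ ∈ VFS(L₁,...,Lₙ), σⱼ ∈ ⋃ᵢαLᵢ} = L₁ ‖ ⋯ ‖ Lₙ. -/
open scoped Classical

/-- Reading off the symbols of vector firing sequences recovers the parallel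
composition: `{σ₁⋯σₘ : σ̲₁⋯σ̲ₘ ∈ VFS(L₁,…,Lₙ)} = L₁ ‖ ⋯ ‖ Lₙ`. -/
theorem vfs_symbols_eq_par {α : Type*} {n : ℕ} (A : Fin n → Set α)
    (L : Fin n → Set (List α)) (hL : IsPCL A L) :
    {s : List α | (∀ a ∈ s, a ∈ ⋃ i, A i) ∧ vprod A s ∈ VFS A L} = Par A L := by
  have key : ∀ (s : List α) (i : Fin n), vprod A s i = proj (A i) s := by
    intro s i
    induction s with
    | nil => rfl
    | cons a t ih =>
      simp only [vprod, vop, proj, ih]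
      by_cases h : a ∈ A i <;> simp [h]
  ext s
  simp only [Set.mem_setOf_eq, VFS, Par, key]
  constructor
  · rintro ⟨h1, _, h2⟩
    exact ⟨h1, h2⟩
  · rintro ⟨h1, h2⟩
    exact ⟨h1, ⟨s, h1, rfl⟩, h2⟩
end
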